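/- For every integer k ≥ 2 there exists a natural number N (depending only on k) such that every connected finite simple graph G whose distance matrix has rank equal to k satisfies |V(G)| ≤ N. In particular, up to isomorphism there are only finitely many connected graphs with distance rank k. -/

import Mathlib

open SimpleGraph

/-- The distance matrix of a finite simple graph, over ℚ: the `(u,v)` entry is the
graph distance between `u` and `v`. -/
noncomputable def distMatrix {V : Type*} [Fintype V] (G : SimpleGraph V) : Matrix V V ℚ :=
  fun u v => (G.dist u v : ℚ)

/-- On any walk, there is a walk between the `i`-th and `j`-th vertices of length `j - i`. -/
lemma getVert_walk {V : Type*} {G : SimpleGraph V} {u v : V} (p : G.Walk u v) (i : ℕ) :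
    ∀ j, i ≤ j → j ≤ p.length →
      ∃ q : G.Walk (p.getVert i) (p.getVert j), q.length = j - i := by
  intro j hij
  induction j, hij using Nat.le_induction with
  | base => intro _; exact ⟨SimpleGraph.Walk.nil, by simp⟩
  | succ j hij ih =>
    intro hj
    obtain ⟨q, hq⟩ := ih (by omega)
    exact ⟨q.concat (p.adj_getVert_succ (by omega)),
      by rw [SimpleGraph.Walk.length_concat, hq]; omega⟩

/-- On a geodesic walk, the distance between the `i`-th and `j`-th vertices is `j - i`. -/
lemma geodesic_dist {V : Type*} {G : SimpleGraph V} (hconn : G.Connected) {u v : V}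
    (p : G.Walk u v) (hp : p.length = G.dist u v) {i j : ℕ} (hij : i ≤ j) (hj : j ≤ p.length) :
    G.dist (p.getVert i) (p.getVert j) = j - i := by
  obtain ⟨q, hq⟩ := getVert_walk p i j hij hj
  have h1 : G.dist (p.getVert i) (p.getVert j) ≤ j - i := hq ▸ SimpleGraph.dist_le q
  obtain ⟨q0, hq0⟩ := getVert_walk p 0 i (Nat.zero_le i) (le_trans hij hj)
  obtain ⟨q1, hq1⟩ := getVert_walk p j p.length hj le_rfl
  have h2 : G.dist u (p.getVert i) ≤ i := by
    have h := SimpleGraph.dist_le q0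
    rw [hq0, p.getVert_zero] at h
    omega
  have h3 : G.dist (p.getVert j) v ≤ p.length - j := by
    have h := SimpleGraph.dist_le q1
    rwa [hq1, p.getVert_length] at h
  have h4 : G.dist u v ≤ G.dist u (p.getVert i) + G.dist (p.getVert i) (p.getVert j)
      + G.dist (p.getVert j) v := by
    calc G.dist u v ≤ G.dist u (p.getVert j) + G.dist (p.getVert j) v :=
          hconn.dist_triangle
      _ ≤ (G.dist u (p.getVert i) + G.dist (p.getVert i) (p.getVert j))
            + G.dist (p.getVert j) v := by
          have := hconn.dist_triangle (u := u) (v := p.getVert i) (w := p.getVert j)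
          omega
  omega

/-- If the row space of the distance matrix has dimension `k`, the diameter is at most
`k + 1`: the second differences of rows along a geodesic give `d - 1` independent vectors. -/
lemma dist_le_of_finrank {V : Type} [Fintype V] {G : SimpleGraph V} (hconn : G.Connected)
    {k : ℕ}
    (hW : Module.finrank ℚ (Submodule.span ℚ (Set.range (distMatrix G))) = k) :
    ∀ u v : V, G.dist u v ≤ k + 1 := by
  intro u v
  by_contra hlt
  push_neg at hlt
  set W := Submodule.span ℚ (Set.range (distMatrix G)) with hWdef
  obtain ⟨p, hp⟩ := hconn.exists_walk_length_eq_dist u v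
  set d := G.dist u v with hd
  have hd2 : k + 2 ≤ d := hlt
  have hpl : p.length = d := hp
  set w : ℕ → V := fun t => p.getVert t with hw
  -- distances between path vertices
  have hdist : ∀ s t : ℕ, s ≤ t → t ≤ d → G.dist (w s) (w t) = t - s := by
    intro s t hst ht
    exact geodesic_dist hconn p hp hst (by omega)
  -- the second-difference vectors
  set f : Fin (d - 1) → (V → ℚ) :=
    fun i => distMatrix G (w i) + distMatrix G (w (i + 2))
      - (2 : ℚ) • distMatrix G (w (i + 1)) with hf
  have hfW : ∀ i, f i ∈ W := by
    intro i
    apply Submodule.sub_mem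
    · exact Submodule.add_mem _ (Submodule.subset_span ⟨_, rfl⟩)
        (Submodule.subset_span ⟨_, rfl⟩)
    · exact Submodule.smul_mem _ _ (Submodule.subset_span ⟨_, rfl⟩)
  have feval : ∀ i j : Fin (d - 1), f j (w ((i : ℕ) + 1)) = if j = i then 2 else 0 := by
    intro i j
    have hi := i.isLt
    have hj := j.isLt
    simp only [hf, Pi.add_apply, Pi.sub_apply, Pi.smul_apply, smul_eq_mul, distMatrix]
    rcases lt_trichotomy (j : ℕ) (i : ℕ) with h | h | h
    · -- j < i
      have e1 : G.dist (w (j : ℕ)) (w ((i : ℕ) + 1)) = (i : ℕ) + 1 - (j : ℕ) :=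
        hdist _ _ (by omega) (by omega)
      have e2 : G.dist (w ((j : ℕ) + 1)) (w ((i : ℕ) + 1)) = (i : ℕ) + 1 - ((j : ℕ) + 1) :=
        hdist _ _ (by omega) (by omega)
      have e3 : G.dist (w ((j : ℕ) + 2)) (w ((i : ℕ) + 1)) = (i : ℕ) + 1 - ((j : ℕ) + 2) :=
        hdist _ _ (by omega) (by omega)
      rw [e1, e2, e3, if_neg (by intro hji; rw [hji] at h; omega)]
      obtain ⟨c, hc⟩ : ∃ c, (i : ℕ) = (j : ℕ) + c + 1 := ⟨(i : ℕ) - (j : ℕ) - 1, by omega⟩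
      rw [show (i : ℕ) + 1 - (j : ℕ) = c + 2 from by omega,
        show (i : ℕ) + 1 - ((j : ℕ) + 1) = c + 1 from by omega,
        show (i : ℕ) + 1 - ((j : ℕ) + 2) = c from by omega]
      push_cast
      ring
    · -- j = i
      have e1 : G.dist (w (j : ℕ)) (w ((i : ℕ) + 1)) = 1 := by
        rw [h]; rw [hdist _ _ (by omega) (by omega)]; omega
      have e2 : G.dist (w ((j : ℕ) + 1)) (w ((i : ℕ) + 1)) = 0 := by
        rw [h]; rw [hdist _ _ (by omega) (by omega)]; omega
      have e3 : G.dist (w ((j : ℕ) + 2)) (w ((i : ℕ) + 1)) = 1 := by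
        rw [SimpleGraph.dist_comm, h, hdist _ _ (by omega) (by omega)]; omega
      rw [e1, e2, e3, if_pos (Fin.ext (by omega))]
      norm_num
    · -- i < j
      have e1 : G.dist (w (j : ℕ)) (w ((i : ℕ) + 1)) = (j : ℕ) - ((i : ℕ) + 1) := by
        rw [SimpleGraph.dist_comm, hdist _ _ (by omega) (by omega)]
      have e2 : G.dist (w ((j : ℕ) + 1)) (w ((i : ℕ) + 1)) = (j : ℕ) + 1 - ((i : ℕ) + 1) := by
        rw [SimpleGraph.dist_comm, hdist _ _ (by omega) (by omega)]
      have e3 : G.dist (w ((j : ℕ) + 2)) (w ((i : ℕ) + 1)) = (j : ℕ) + 2 - ((i : ℕ) + 1) := by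
        rw [SimpleGraph.dist_comm, hdist _ _ (by omega) (by omega)]
      rw [e1, e2, e3, if_neg (by intro hji; rw [hji] at h; omega)]
      obtain ⟨c, hc⟩ : ∃ c, (j : ℕ) = (i : ℕ) + c + 1 := ⟨(j : ℕ) - (i : ℕ) - 1, by omega⟩
      rw [show (j : ℕ) - ((i : ℕ) + 1) = c from by omega,
        show (j : ℕ) + 1 - ((i : ℕ) + 1) = c + 1 from by omega,
        show (j : ℕ) + 2 - ((i : ℕ) + 1) = c + 2 from by omega]
      push_cast
      ring
  have hli : LinearIndependent ℚ f := by
    rw [Fintype.linearIndependent_iff]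
    intro c hc i
    have h := congr_fun hc (w ((i : ℕ) + 1))
    simp only [Finset.sum_apply, Pi.smul_apply, smul_eq_mul, Pi.zero_apply] at h
    rw [Finset.sum_congr rfl (fun j _ => by rw [feval i j])] at h
    simp only [mul_ite, mul_zero] at h
    rw [Finset.sum_ite_eq' Finset.univ i (fun j => c j * 2)] at h
    simp at h
    exact h
  have hli' : LinearIndependent ℚ (fun i => (⟨f i, hfW i⟩ : W)) :=
    LinearIndependent.of_comp W.subtype hli
  have hcard := hli'.fintype_card_le_finrank
  rw [hW, Fintype.card_fin] at hcard
  omega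

/-- For every integer k ≥ 2 there is a natural number N (depending only on k) such that every
connected finite simple graph whose distance matrix has rank k has at most N vertices. -/
theorem finitely_many_graphs_of_distRank (k : ℕ) (hk : 2 ≤ k) :
    ∃ N : ℕ, ∀ (V : Type) [Fintype V] (G : SimpleGraph V),
      G.Connected → (distMatrix G).rank = k → Fintype.card V ≤ N := by
  classical
  refine ⟨(k + 2) ^ k, fun V _ G hconn hrank => ?_⟩
  have hW : Module.finrank ℚ (Submodule.span ℚ (Set.range (distMatrix G))) = k := by
    exact (Matrix.rank_eq_finrank_span_row _).symm.trans hrank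
  have hdiam : ∀ u v : V, G.dist u v ≤ k + 1 := dist_le_of_finrank hconn hW
  have hrowinj : ∀ u u' : V, distMatrix G u = distMatrix G u' → u = u' := by
    intro u u' h
    have h0 := congr_fun h u
    simp only [distMatrix, SimpleGraph.dist_self, Nat.cast_zero] at h0
    have : G.dist u' u = 0 := by exact_mod_cast h0.symm
    exact ((hconn.dist_eq_zero_iff).mp this).symm
  obtain ⟨b, hbsub, hbspan, hbind⟩ := exists_linearIndependent ℚ (Set.range (distMatrix G))
  have hbfin : b.Finite := (Set.finite_range _).subset hbsub
  haveI := hbfin.fintype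
  have hbcard : b.toFinset.card = k := by
    have h := finrank_span_set_eq_card hbind
    rw [hbspan] at h
    rw [← h]; exact hW
  set S : Finset V := Finset.univ.filter (fun v => distMatrix G v ∈ b) with hS
  have hScard : S.card ≤ k := by
    rw [← hbcard]
    apply Finset.card_le_card_of_injOn (fun v => distMatrix G v)
    · intro x hx
      rw [Finset.mem_coe, Set.mem_toFinset]
      exact (Finset.mem_filter.mp hx).2
    · intro x hx y hy hxy
      exact hrowinj x y hxy
  have hvanish : ∀ u u' : V, (∀ v ∈ S, G.dist u v = G.dist u' v) → u = u' := by
    intro u u' h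
    set φ : (V → ℚ) →ₗ[ℚ] ℚ :=
      (LinearMap.proj u : (V → ℚ) →ₗ[ℚ] ℚ) - (LinearMap.proj u' : (V → ℚ) →ₗ[ℚ] ℚ) with hφ
    have hφb : ∀ x ∈ b, x ∈ LinearMap.ker φ := by
      intro x hx
      obtain ⟨z, rfl⟩ := hbsub hx
      have hzS : z ∈ S := Finset.mem_filter.mpr ⟨Finset.mem_univ z, hx⟩
      have h1 : G.dist u z = G.dist u' z := h z hzS
      simp only [LinearMap.mem_ker, hφ, LinearMap.sub_apply, LinearMap.proj_apply, distMatrix,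
        sub_eq_zero]
      have h2 : G.dist z u = G.dist z u' := by
        rw [SimpleGraph.dist_comm (u := z) (v := u), SimpleGraph.dist_comm (u := z) (v := u')]
        exact h1
      exact_mod_cast congrArg Nat.cast h2
    have hker : Submodule.span ℚ b ≤ LinearMap.ker φ := Submodule.span_le.mpr hφb
    have hDu : distMatrix G u ∈ Submodule.span ℚ b := by
      rw [hbspan]; exact Submodule.subset_span ⟨u, rfl⟩
    have h0 := hker hDu
    simp only [LinearMap.mem_ker, hφ, LinearMap.sub_apply, LinearMap.proj_apply, distMatrix,
      SimpleGraph.dist_self, Nat.cast_zero, zero_sub, neg_eq_zero, Nat.cast_eq_zero] at h0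
    exact (hconn.dist_eq_zero_iff).mp h0
  set Ψ : V → (S → Fin (k + 2)) :=
    fun u z => ⟨G.dist u z.1, by have := hdiam u z.1; omega⟩ with hΨ
  have hΨinj : Function.Injective Ψ := by
    intro u u' h
    apply hvanish
    intro z hz
    have := congr_fun h ⟨z, hz⟩
    exact congrArg Fin.val this
  calc Fintype.card V ≤ Fintype.card (S → Fin (k + 2)) := Fintype.card_le_of_injective Ψ hΨinj
    _ = (k + 2) ^ S.card := by rw [Fintype.card_fun, Fintype.card_fin, Fintype.card_coe]
    _ ≤ (k + 2) ^ k := Nat.pow_le_pow_right (by omega) hScard
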